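/- (Segal's element) Let G be a finite group, γ a conjugacy class, and H a subgroup of G with H ∩ γ = ∅. Then there exists a virtual representation η ∈ R(G) such that the restriction η|_H = 0 in R(H) and χ_η(g) ≠ 0 for every g ∈ γ. -/

import Mathlib

/-- The representation ring of `G` over `ℂ`, modeled as the ring of virtual characters. -/
def repRing (G : Type) [Group G] : Subring (G → ℂ) :=
  Subring.closure {f : G → ℂ | ∃ V : FDRep ℂ G, f = FDRep.character V}

/-- Segal's element: a virtual character of `G` whose restriction to `H` vanishes
(i.e. is zero in `R(H)`), but which is nonzero on every element of `γ`. -/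
theorem stmt_12 {G : Type} [Group G] [Fintype G] (g₀ : G) (γ : Set G)
    (hγ : γ = {x : G | ∃ k : G, k * g₀ * k⁻¹ = x})
    (H : Subgroup G) (hH : (H : Set G) ∩ γ = ∅) :
    ∃ η : repRing G, (∀ h ∈ H, (η : G → ℂ) h = 0) ∧ ∀ g ∈ γ, (η : G → ℂ) g ≠ 0 := by
  classical
  letI : Fintype (G ⧸ H) := Fintype.ofFinite _
  set θ : G → ℂ := fun g => ∑ x : G ⧸ H, if g • x = x then (1 : ℂ) else 0 with hθ
  have hθchar : θ = FDRep.character (FDRep.of (Representation.ofMulAction ℂ G (G ⧸ H))) := by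
    funext g
    have h1 : FDRep.character (FDRep.of (Representation.ofMulAction ℂ G (G ⧸ H))) g =
        LinearMap.trace ℂ (MonoidAlgebra ℂ (G ⧸ H)) (Representation.ofMulAction ℂ G (G ⧸ H) g) := rfl
    rw [h1, LinearMap.trace_eq_matrix_trace ℂ (MonoidAlgebra.basis (G ⧸ H) ℂ), Matrix.trace]
    simp only [hθ, Matrix.diag, LinearMap.toMatrix_apply, MonoidAlgebra.basis_apply,
      Representation.ofMulAction_single]
    refine Finset.sum_congr rfl fun x _ => ?_
    simp [MonoidAlgebra.basis, MonoidAlgebra.coeffLinearEquiv, Finsupp.single_apply]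
  have hθmem : θ ∈ repRing G := Subring.subset_closure ⟨_, hθchar⟩
  set n := Fintype.card (G ⧸ H) with hn
  have hθH : ∀ h ∈ H, ∃ m : ℕ, 1 ≤ m ∧ m ≤ n ∧ θ h = (m : ℂ) := by
    intro h hh
    refine ⟨(Finset.univ.filter (fun x : G ⧸ H => h • x = x)).card, ?_, ?_, ?_⟩
    · rw [Nat.succ_le_iff, Finset.card_pos]
      refine ⟨((1 : G) : G ⧸ H), Finset.mem_filter.2 ⟨Finset.mem_univ _, ?_⟩⟩
      rw [MulAction.Quotient.smul_mk, QuotientGroup.eq]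
      simpa using hh
    · exact Finset.card_filter_le _ _
    · rw [hθ, Finset.card_filter]; push_cast; rfl
  have hθγ : ∀ g ∈ γ, θ g = 0 := by
    intro g hg
    rw [hθ]
    refine Finset.sum_eq_zero fun x _ => ?_
    rw [if_neg]
    induction x using QuotientGroup.induction_on with
    | H k =>
      intro hfix
      rw [MulAction.Quotient.smul_mk, QuotientGroup.eq] at hfix
      have hmem : k⁻¹ * g * k ∈ H := by
        have h2 : (g • k)⁻¹ * k = k⁻¹ * g⁻¹ * k := by
          simp [smul_eq_mul, mul_assoc]
        rw [h2] at hfix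
        have := H.inv_mem hfix
        simpa [mul_assoc] using this
      have hγmem : k⁻¹ * g * k ∈ γ := by
        rw [hγ] at hg ⊢
        obtain ⟨j, hj⟩ := hg
        exact ⟨k⁻¹ * j, by rw [← hj]; group⟩
      have : k⁻¹ * g * k ∈ (H : Set G) ∩ γ := ⟨hmem, hγmem⟩
      rw [hH] at this
      exact this
  -- build η
  refine ⟨(∏ j ∈ Finset.Icc 1 n, (⟨θ, hθmem⟩ - (j : repRing G)) : repRing G), ?_, ?_⟩
  · intro h hh
    obtain ⟨m, hm1, hmn, hθh⟩ := hθH h hh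
    have hcoe : ((∏ j ∈ Finset.Icc 1 n, (⟨θ, hθmem⟩ - (j : repRing G)) : repRing G) : G → ℂ) h
        = ∏ j ∈ Finset.Icc 1 n, (θ h - (j : ℂ)) := by
      push_cast
      simp [Finset.prod_apply]
    rw [hcoe]
    apply Finset.prod_eq_zero (Finset.mem_Icc.2 ⟨hm1, hmn⟩)
    rw [hθh]; ring
  · intro g hg
    have hcoe : ((∏ j ∈ Finset.Icc 1 n, (⟨θ, hθmem⟩ - (j : repRing G)) : repRing G) : G → ℂ) g
        = ∏ j ∈ Finset.Icc 1 n, (θ g - (j : ℂ)) := by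
      push_cast
      simp [Finset.prod_apply]
    rw [hcoe, hθγ g hg]
    apply Finset.prod_ne_zero_iff.2
    intro j hj
    have h1 : 1 ≤ j := (Finset.mem_Icc.1 hj).1
    have : (j : ℂ) ≠ 0 := Nat.cast_ne_zero.2 (by omega)
    intro h0
    apply this
    linear_combination -h0
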